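/- Suppose in addition (to the real path setup) that for each t, E(t) = U(t)T(t)V(t)^T with U(t), V(t) ∈ ℝ^{n×4} having orthonormal columns, T(t) ∈ ℝ^{4×4} invertible, ‖E(t)‖_F = 1, and that E solves the projected differential equation Ė = −P̃_E(Re(S)) + ⟨E, Re(S)⟩E, where S(t) = y y^H G^H + G^H x x^H, Re(S) is the entrywise real part, and P̃_E(Z) = Z − (I − UU^T) Z (I − VV^T). Then d/dt |y(t)^H x(t)| = −ε |y(t)^H x(t)| · ‖P̃_E(Re(S)) − ⟨E, Re(S)⟩E‖_F². -/

import Mathlib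

open Matrix

/-- Real Frobenius inner product `⟨A,B⟩ = trace(Aᵀ B)`. -/
def frobInnerR {n : ℕ} (A B : Matrix (Fin n) (Fin n) ℝ) : ℝ :=
  (Aᵀ * B).trace

/-- Real Frobenius norm. -/
noncomputable def frobNormR {n : ℕ} (A : Matrix (Fin n) (Fin n) ℝ) : ℝ :=
  Real.sqrt (frobInnerR A A)

/-- Complexification of a real matrix. -/
def toC {n : ℕ} (M : Matrix (Fin n) (Fin n) ℝ) : Matrix (Fin n) (Fin n) ℂ :=
  M.map (fun a => (a : ℂ))

/-- `G` is a group inverse of `M`. -/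
def IsGroupInverse {n : ℕ} (M G : Matrix (Fin n) (Fin n) ℂ) : Prop :=
  M * G = G * M ∧ G * M * G = G ∧ M * G * M = M

/-- The matrix `S = y yᴴ Gᴴ + Gᴴ x xᴴ`. -/
noncomputable def Smat {n : ℕ} (x y : Fin n → ℂ) (G : Matrix (Fin n) (Fin n) ℂ) :
    Matrix (Fin n) (Fin n) ℂ :=
  vecMulVec y (star y) * Gᴴ + Gᴴ * vecMulVec x (star x)

/-- Orthogonal projection onto the tangent space of the real rank-4 manifold at `E = U T Vᵀ`:
`P̃_E(Z) = Z − (I − UUᵀ) Z (I − VVᵀ)`. -/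
def PER {n : ℕ} (U V : Matrix (Fin n) (Fin 4) ℝ) (Z : Matrix (Fin n) (Fin n) ℝ) :
    Matrix (Fin n) (Fin n) ℝ :=
  Z - (1 - U * Uᵀ) * Z * (1 - V * Vᵀ)

lemma frob_eq_sum {n : ℕ} (A B : Matrix (Fin n) (Fin n) ℝ) :
    frobInnerR A B = ∑ j, ∑ i, A i j * B i j := by
  simp [frobInnerR, Matrix.trace, Matrix.mul_apply, Matrix.diag]

lemma frob_comm {n : ℕ} (A B : Matrix (Fin n) (Fin n) ℝ) :
    frobInnerR A B = frobInnerR B A := by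
  simp only [frob_eq_sum]; congr 1; ext j; congr 1; ext i; ring

lemma frob_self_nonneg {n : ℕ} (A : Matrix (Fin n) (Fin n) ℝ) : 0 ≤ frobInnerR A A := by
  rw [frob_eq_sum]
  exact Finset.sum_nonneg fun j _ => Finset.sum_nonneg fun i _ => mul_self_nonneg _

lemma frobNorm_sq {n : ℕ} (A : Matrix (Fin n) (Fin n) ℝ) :
    frobNormR A ^ 2 = frobInnerR A A := Real.sq_sqrt (frob_self_nonneg A)

lemma frob_add_right {n : ℕ} (A B C : Matrix (Fin n) (Fin n) ℝ) :
    frobInnerR A (B + C) = frobInnerR A B + frobInnerR A C := by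
  simp [frobInnerR, Matrix.mul_add]

lemma frob_sub_right {n : ℕ} (A B C : Matrix (Fin n) (Fin n) ℝ) :
    frobInnerR A (B - C) = frobInnerR A B - frobInnerR A C := by
  simp [frobInnerR, Matrix.mul_sub]

lemma frob_smul_right {n : ℕ} (r : ℝ) (A B : Matrix (Fin n) (Fin n) ℝ) :
    frobInnerR A (r • B) = r * frobInnerR A B := by
  simp [frobInnerR, Matrix.mul_smul]

lemma frob_W_E {n : ℕ} (U V : Matrix (Fin n) (Fin 4) ℝ) (T : Matrix (Fin 4) (Fin 4) ℝ)
    (Z : Matrix (Fin n) (Fin n) ℝ) (hU : Uᵀ * U = 1) :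
    frobInnerR ((1 - U * Uᵀ) * Z * (1 - V * Vᵀ)) (U * T * Vᵀ) = 0 := by
  have hQU : (1 - U * Uᵀ) * U = 0 := by
    rw [Matrix.sub_mul, Matrix.one_mul, Matrix.mul_assoc, hU, Matrix.mul_one, sub_self]
  set Q := 1 - U * Uᵀ with hQdef
  set P := 1 - V * Vᵀ with hPdef
  have hQt : Qᵀ = Q := by
    rw [hQdef, transpose_sub, transpose_one, transpose_mul, transpose_transpose]
  have hPt : Pᵀ = P := by
    rw [hPdef, transpose_sub, transpose_one, transpose_mul, transpose_transpose]
  unfold frobInnerR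
  rw [transpose_mul, transpose_mul, hQt, hPt]
  have : P * (Zᵀ * Q) * (U * T * Vᵀ) = P * Zᵀ * ((Q * U) * (T * Vᵀ)) := by
    simp only [Matrix.mul_assoc]
  rw [this, hQU, Matrix.zero_mul, Matrix.mul_zero, trace_zero]

lemma frob_W_Z {n : ℕ} (U V : Matrix (Fin n) (Fin 4) ℝ) (Z : Matrix (Fin n) (Fin n) ℝ)
    (hU : Uᵀ * U = 1) (hV : Vᵀ * V = 1) :
    frobInnerR ((1 - U * Uᵀ) * Z * (1 - V * Vᵀ)) Z
      = frobInnerR ((1 - U * Uᵀ) * Z * (1 - V * Vᵀ)) ((1 - U * Uᵀ) * Z * (1 - V * Vᵀ)) := by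
  set Q := 1 - U * Uᵀ with hQdef
  set P := 1 - V * Vᵀ with hPdef
  have hQ : Q * Q = Q := by
    rw [hQdef]
    have h1 : U * Uᵀ * (U * Uᵀ) = U * Uᵀ := by
      rw [show U * Uᵀ * (U * Uᵀ) = U * (Uᵀ * U) * Uᵀ by simp only [Matrix.mul_assoc], hU,
        Matrix.mul_one]
    rw [sub_mul, one_mul, mul_sub, mul_one, h1]; abel
  have hP : P * P = P := by
    rw [hPdef]
    have h1 : V * Vᵀ * (V * Vᵀ) = V * Vᵀ := by
      rw [show V * Vᵀ * (V * Vᵀ) = V * (Vᵀ * V) * Vᵀ by simp only [Matrix.mul_assoc], hV,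
        Matrix.mul_one]
    rw [sub_mul, one_mul, mul_sub, mul_one, h1]; abel
  have hQt : Qᵀ = Q := by
    rw [hQdef, transpose_sub, transpose_one, transpose_mul, transpose_transpose]
  have hPt : Pᵀ = P := by
    rw [hPdef, transpose_sub, transpose_one, transpose_mul, transpose_transpose]
  unfold frobInnerR
  rw [transpose_mul, transpose_mul, hQt, hPt]
  have e1 : P * (Zᵀ * Q) * (Q * Z * P) = P * Zᵀ * (Q * Q) * Z * P := by
    simp only [Matrix.mul_assoc]
  have e2 : P * (P * Zᵀ * Q * Z) = (P * P) * Zᵀ * Q * Z := by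
    simp only [Matrix.mul_assoc]
  calc (P * (Zᵀ * Q) * Z).trace
      = ((P * Zᵀ * Q * Z)).trace := by simp only [Matrix.mul_assoc]
    _ = ((P * (Zᵀ * Q)) * (Q * Z * P)).trace := by
        rw [e1, hQ, trace_mul_comm (P * Zᵀ * Q * Z) P, e2, hP]

lemma key_alg {n : ℕ} (U V : Matrix (Fin n) (Fin 4) ℝ) (T : Matrix (Fin 4) (Fin 4) ℝ)
    (Z E : Matrix (Fin n) (Fin n) ℝ) (hU : Uᵀ * U = 1) (hV : Vᵀ * V = 1)
    (hEfac : E = U * T * Vᵀ) (hE1 : frobInnerR E E = 1) :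
    frobInnerR Z (-(PER U V Z) + (frobInnerR E Z) • E)
      = - frobInnerR (PER U V Z - (frobInnerR E Z) • E) (PER U V Z - (frobInnerR E Z) • E) := by
  set W := (1 - U * Uᵀ) * Z * (1 - V * Vᵀ) with hW
  have hWE : frobInnerR W E = 0 := by rw [hEfac]; exact frob_W_E U V T Z hU
  have hWZ : frobInnerR W Z = frobInnerR W W := frob_W_Z U V Z hU hV
  set α := frobInnerR E Z with hα
  have hPER : PER U V Z = Z - W := rfl
  rw [hPER]
  have hZE : frobInnerR Z E = α := frob_comm Z E
  have hEW : frobInnerR E W = 0 := by rw [frob_comm]; exact hWE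
  have expand1 : frobInnerR Z (-(Z - W) + α • E)
      = -(frobInnerR Z Z) + frobInnerR Z W + α * α := by
    rw [show -(Z - W) + α • E = (α • E - Z) + W by abel, frob_add_right, frob_sub_right,
      frob_smul_right, hZE]; ring
  have expand2 : frobInnerR (Z - W - α • E) (Z - W - α • E)
      = frobInnerR Z Z - frobInnerR Z W - α * α := by
    have l1 : ∀ B : Matrix (Fin n) (Fin n) ℝ, frobInnerR (Z - W - α • E) B
        = frobInnerR B Z - frobInnerR B W - α * frobInnerR B E := by
      intro B
      rw [frob_comm, frob_sub_right, frob_sub_right, frob_smul_right]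
    rw [l1, l1, l1, l1, hZE, hWE, hEW, hE1, ← hα, frob_comm Z W, hWZ]
    ring
  rw [expand1, expand2]; ring

lemma hA_re {n : ℕ} (x : Fin n → ℂ) (G : Matrix (Fin n) (Fin n) ℂ)
    (B : Matrix (Fin n) (Fin n) ℝ) :
    (star x ⬝ᵥ (G *ᵥ (toC B *ᵥ x))).re
      = ∑ i, ∑ j, ((Gᴴ * vecMulVec x (star x)) i j).re * B i j := by
  simp only [dotProduct, mulVec, Pi.star_apply, toC, Matrix.map_apply, Matrix.mul_apply,
    conjTranspose_apply, vecMulVec_apply, Complex.re_sum, Finset.mul_sum, Finset.sum_mul]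
  rw [Finset.sum_comm]
  refine Finset.sum_congr rfl fun i _ => ?_
  rw [Finset.sum_comm]
  refine Finset.sum_congr rfl fun j _ => Finset.sum_congr rfl fun m _ => ?_
  simp [Complex.mul_re, Complex.mul_im]
  ring

lemma hB_re {n : ℕ} (y : Fin n → ℂ) (G : Matrix (Fin n) (Fin n) ℂ)
    (B : Matrix (Fin n) (Fin n) ℝ) :
    (star y ⬝ᵥ ((toC B * G) *ᵥ y)).re
      = ∑ i, ∑ j, ((vecMulVec y (star y) * Gᴴ) i j).re * B i j := by
  simp only [dotProduct, mulVec, Pi.star_apply, toC, Matrix.map_apply, Matrix.mul_apply,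
    conjTranspose_apply, vecMulVec_apply, Complex.re_sum, Finset.mul_sum, Finset.sum_mul]
  refine Finset.sum_congr rfl fun i _ => ?_
  rw [Finset.sum_comm]
  refine Finset.sum_congr rfl fun j _ => Finset.sum_congr rfl fun m _ => ?_
  simp [Complex.mul_re, Complex.mul_im]
  ring

lemma re_c {n : ℕ} (x y : Fin n → ℂ) (G : Matrix (Fin n) (Fin n) ℂ)
    (B : Matrix (Fin n) (Fin n) ℝ) :
    (star x ⬝ᵥ (G *ᵥ (toC B *ᵥ x)) + star y ⬝ᵥ ((toC B * G) *ᵥ y)).re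
      = frobInnerR ((Smat x y G).map Complex.re) B := by
  have hR : frobInnerR ((Smat x y G).map Complex.re) B
      = (∑ i, ∑ j, ((vecMulVec y (star y) * Gᴴ) i j).re * B i j)
        + ∑ i, ∑ j, ((Gᴴ * vecMulVec x (star x)) i j).re * B i j := by
    rw [frob_eq_sum, Finset.sum_comm]
    simp only [Smat, Matrix.map_apply, Matrix.add_apply, Complex.add_re, add_mul,
      Finset.sum_add_distrib]
  rw [Complex.add_re, hA_re, hB_re, hR]
  exact add_comm _ _
theorem stmt11 {n : ℕ} (hn : 2 ≤ n) (A : Matrix (Fin n) (Fin n) ℝ) (ε : ℝ) (hε : 0 < ε)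
    (E E' : ℝ → Matrix (Fin n) (Fin n) ℝ)
    (U V : ℝ → Matrix (Fin n) (Fin 4) ℝ) (T : ℝ → Matrix (Fin 4) (Fin 4) ℝ)
    (x x' y y' : ℝ → (Fin n → ℂ))
    (lam lam' : ℝ → ℂ)
    (G G' : ℝ → Matrix (Fin n) (Fin n) ℂ)
    (hEdiff : ∀ t i j, HasDerivAt (fun s => E s i j) (E' t i j) t)
    (hxdiff : ∀ t i, HasDerivAt (fun s => x s i) (x' t i) t)
    (hydiff : ∀ t i, HasDerivAt (fun s => y s i) (y' t i) t)
    (hlamdiff : ∀ t, HasDerivAt lam (lam' t) t)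
    (hGdiff : ∀ t i j, HasDerivAt (fun s => G s i j) (G' t i j) t)
    (heig : ∀ t, toC (A + ε • E t) *ᵥ x t = lam t • x t)
    (hleig : ∀ t, star (y t) ᵥ* toC (A + ε • E t) = lam t • star (y t))
    (hxnorm : ∀ t, star (x t) ⬝ᵥ x t = 1)
    (hynorm : ∀ t, star (y t) ⬝ᵥ y t = 1)
    (hyx : ∀ t, star (y t) ⬝ᵥ x t ≠ 0)
    (hG : ∀ t, IsGroupInverse (toC (A + ε • E t) - lam t • 1) (G t))
    (hGx : ∀ t, G t *ᵥ x t = 0)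
    (hyG : ∀ t, star (y t) ᵥ* G t = 0)
    (hx' : ∀ t, x' t =
      (star (x t) ⬝ᵥ (G t *ᵥ (toC (ε • E' t) *ᵥ x t))) • x t
        - G t *ᵥ (toC (ε • E' t) *ᵥ x t))
    (hy' : ∀ t, star (y' t) =
      (star (y t) ⬝ᵥ ((toC (ε • E' t) * G t) *ᵥ y t)) • star (y t)
        - star (y t) ᵥ* (toC (ε • E' t) * G t))
    (hUorth : ∀ t, (U t)ᵀ * U t = 1)
    (hVorth : ∀ t, (V t)ᵀ * V t = 1)
    (hTinv : ∀ t, IsUnit (T t))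
    (hEfac : ∀ t, E t = U t * T t * (V t)ᵀ)
    (hEnorm : ∀ t, frobNormR (E t) = 1)
    (hODE : ∀ t, E' t =
        -(PER (U t) (V t) ((Smat (x t) (y t) (G t)).map Complex.re))
          + (frobInnerR (E t) ((Smat (x t) (y t) (G t)).map Complex.re)) • E t) :
    ∀ t, HasDerivAt (fun s => ‖star (y s) ⬝ᵥ x s‖)
      (-(ε * ‖star (y t) ⬝ᵥ x t‖) *
        frobNormR (PER (U t) (V t) ((Smat (x t) (y t) (G t)).map Complex.re)
          - (frobInnerR (E t) ((Smat (x t) (y t) (G t)).map Complex.re)) • E t) ^ 2) t := by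
  intro t
  set Z := (Smat (x t) (y t) (G t)).map Complex.re with hZ
  set N := frobNormR (PER (U t) (V t) Z - (frobInnerR (E t) Z) • E t) with hN
  set a := star (y t) ⬝ᵥ x t with ha
  set c : ℂ := star (x t) ⬝ᵥ (G t *ᵥ (toC (ε • E' t) *ᵥ x t))
    + star (y t) ⬝ᵥ ((toC (ε • E' t) * G t) *ᵥ y t) with hc
  -- derivative of the dot product
  have hf : HasDerivAt (fun s => star (y s) ⬝ᵥ x s)
      (star (y' t) ⬝ᵥ x t + star (y t) ⬝ᵥ x' t) t := by
    have h1 : ∀ i ∈ (Finset.univ : Finset (Fin n)), HasDerivAt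
        (fun s => star (y s i) * x s i) (star (y' t i) * x t i + star (y t i) * x' t i) t :=
      fun i _ => ((hydiff t i).star.mul (hxdiff t i))
    have h2 := HasDerivAt.fun_sum h1
    have h3 : (fun s => star (y s) ⬝ᵥ x s) = fun s => ∑ i, star (y s i) * x s i := by
      funext s; simp [dotProduct]
    rw [h3]
    simpa [dotProduct, Finset.sum_add_distrib] using h2
  -- the derivative equals c * a
  have e1 : star (y t) ⬝ᵥ x' t
      = (star (x t) ⬝ᵥ (G t *ᵥ (toC (ε • E' t) *ᵥ x t))) * a := by
    rw [hx' t, dotProduct_sub, dotProduct_smul, dotProduct_mulVec (star (y t)) (G t), hyG t,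
      zero_dotProduct, sub_zero, smul_eq_mul, ha]
  have e2 : star (y' t) ⬝ᵥ x t
      = (star (y t) ⬝ᵥ ((toC (ε • E' t) * G t) *ᵥ y t)) * a := by
    rw [hy' t, sub_dotProduct, smul_dotProduct, ← dotProduct_mulVec,
      ← mulVec_mulVec (x t) (toC (ε • E' t)) (G t), hGx t,
      mulVec_zero, dotProduct_zero, sub_zero, smul_eq_mul, ha]
  have hd : star (y' t) ⬝ᵥ x t + star (y t) ⬝ᵥ x' t = c * a := by
    rw [e1, e2, hc]; ring
  rw [hd] at hf
  -- real part of c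
  have hE1 : frobInnerR (E t) (E t) = 1 := by
    have h := frobNorm_sq (E t)
    rw [hEnorm t] at h
    simpa using h.symm
  have hcre : c.re = -(ε * N ^ 2) := by
    rw [hc, re_c, ← hZ, frob_smul_right, hODE t, ← hZ,
      key_alg (U t) (V t) (T t) Z (E t) (hUorth t) (hVorth t) (hEfac t) hE1, hN, frobNorm_sq]
    ring
  -- derivative of the absolute value
  have ha0 : a ≠ 0 := hyx t
  have hq0 : Complex.normSq a ≠ 0 := by
    simpa [Complex.normSq_eq_zero] using ha0
  have hre : HasDerivAt (fun s => (star (y s) ⬝ᵥ x s).re) (c * a).re t := by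
    exact (Complex.reCLM.hasFDerivAt.comp_hasDerivAt t hf)
  have him : HasDerivAt (fun s => (star (y s) ⬝ᵥ x s).im) (c * a).im t := by
    exact (Complex.imCLM.hasFDerivAt.comp_hasDerivAt t hf)
  have hg : HasDerivAt (fun s => (star (y s) ⬝ᵥ x s).re * (star (y s) ⬝ᵥ x s).re
      + (star (y s) ⬝ᵥ x s).im * (star (y s) ⬝ᵥ x s).im)
      (((c * a).re * a.re + a.re * (c * a).re) + ((c * a).im * a.im + a.im * (c * a).im)) t :=
    (hre.mul hre).add (him.mul him)
  have hqa : a.re * a.re + a.im * a.im = Complex.normSq a := (Complex.normSq_apply a).symm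
  have hsq : HasDerivAt (fun s => Real.sqrt ((star (y s) ⬝ᵥ x s).re * (star (y s) ⬝ᵥ x s).re
      + (star (y s) ⬝ᵥ x s).im * (star (y s) ⬝ᵥ x s).im))
      (1 / (2 * Real.sqrt (a.re * a.re + a.im * a.im)) *
        (((c * a).re * a.re + a.re * (c * a).re) + ((c * a).im * a.im + a.im * (c * a).im))) t := by
    have h0 : a.re * a.re + a.im * a.im ≠ 0 := by rw [hqa]; exact hq0
    exact (Real.hasDerivAt_sqrt h0).comp t hg
  have hfun : (fun s => ‖star (y s) ⬝ᵥ x s‖)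
      = fun s => Real.sqrt ((star (y s) ⬝ᵥ x s).re * (star (y s) ⬝ᵥ x s).re
        + (star (y s) ⬝ᵥ x s).im * (star (y s) ⬝ᵥ x s).im) := by
    funext s
    rw [Complex.norm_def, Complex.normSq_apply]
  rw [hfun]
  -- identify the derivative values
  have hnum : ((c * a).re * a.re + a.re * (c * a).re) + ((c * a).im * a.im + a.im * (c * a).im)
      = 2 * (c.re * Complex.normSq a) := by
    simp [Complex.mul_re, Complex.mul_im, Complex.normSq_apply]
    ring
  have habs : ‖a‖ = Real.sqrt (Complex.normSq a) := Complex.norm_def a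
  have hqpos : 0 < Complex.normSq a := by
    rcases lt_or_eq_of_le (Complex.normSq_nonneg a) with h | h
    · exact h
    · exact absurd h.symm hq0
  have hspos : 0 < Real.sqrt (Complex.normSq a) := Real.sqrt_pos.mpr hqpos
  have hval : 1 / (2 * Real.sqrt (a.re * a.re + a.im * a.im)) *
      (((c * a).re * a.re + a.re * (c * a).re) + ((c * a).im * a.im + a.im * (c * a).im))
      = -(ε * ‖a‖) * N ^ 2 := by
    rw [hnum, hqa]
    rw [show (1:ℝ)/(2*Real.sqrt (Complex.normSq a)) * (2*(c.re * Complex.normSq a))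
      = c.re * (Complex.normSq a / Real.sqrt (Complex.normSq a)) from by ring]
    rw [Real.div_sqrt, ← habs, hcre]
    ring
  rw [← hval]
  exact hsq
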